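/- Let X_1,...,X_K be finite sets of complex numbers forming a UDCG (uniquely decomposable constellation group). Let D = diag(β_1,...,β_K) with β_k > 0, let Π be a K×K permutation matrix, and let p_1,...,p_K > 0. For an information vector s = (s_1,...,s_K) with s_k ∈ X_k, define the K×2 matrix S(s) with first column (1/√p_1,...,1/√p_K)ᵀ and second column (√p_1 s_1,...,√p_K s_K)ᵀ, and set X(s) = D^{-1/2} Π S(s). If X(s)ᴴ D X(s) = X(s̃)ᴴ D X(s̃) for two such information vectors s, s̃, then s = s̃ (and hence X(s) = X(s̃)). -/

import Mathlib

open Matrix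
/-- Sets `X 1, …, X K` of complex numbers form a uniquely decomposable
constellation group (UDCG). -/
def IsUDCG {K : ℕ} (X : Fin K → Set ℂ) : Prop :=
  ∀ x x' : Fin K → ℂ, (∀ k, x k ∈ X k) → (∀ k, x' k ∈ X k) →
    ∑ k, x k = ∑ k, x' k → x = x'

/-- The `K × 2` signal matrix with first column `(1/√p_k)_k` and second column
`(√p_k s_k)_k`. -/
noncomputable def sigMat {K : ℕ} (p : Fin K → ℝ) (s : Fin K → ℂ) :
    Matrix (Fin K) (Fin 2) ℂ :=
  Matrix.of fun k t =>
    if t = 0 then ((1 / Real.sqrt (p k) : ℝ) : ℂ) else ((Real.sqrt (p k) : ℝ) : ℂ) * s k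

theorem ufmustm_unique_decoding {K : ℕ} (X : Fin K → Set ℂ) (hX : IsUDCG X)
    (β : Fin K → ℝ) (hβ : ∀ k, 0 < β k) (π : Equiv.Perm (Fin K))
    (p : Fin K → ℝ) (hp : ∀ k, 0 < p k)
    (s s' : Fin K → ℂ) (hs : ∀ k, s k ∈ X k) (hs' : ∀ k, s' k ∈ X k)
    (Xmat : (Fin K → ℂ) → Matrix (Fin K) (Fin 2) ℂ)
    (hXmat : ∀ v, Xmat v =
      Matrix.diagonal (fun k => ((Real.sqrt (β k))⁻¹ : ℂ)) * π.permMatrix ℂ * sigMat p v)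
    (hGram : (Xmat s)ᴴ * Matrix.diagonal (fun k => ((β k : ℝ) : ℂ)) * Xmat s =
             (Xmat s')ᴴ * Matrix.diagonal (fun k => ((β k : ℝ) : ℂ)) * Xmat s') :
    s = s' ∧ Xmat s = Xmat s' := by
  classical
  have hXe : ∀ v (k : Fin K) (t : Fin 2),
      Xmat v k t = ((Real.sqrt (β k))⁻¹ : ℂ) * sigMat p v (π k) t := by
    intro v k t
    rw [hXmat, Matrix.mul_assoc, Equiv.Perm.permMatrix, PEquiv.toMatrix_toPEquiv_mul,
      Matrix.diagonal_mul]
    rfl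
  have key : ∀ v : Fin K → ℂ,
      ((Xmat v)ᴴ * Matrix.diagonal (fun k => ((β k : ℝ) : ℂ)) * Xmat v) 0 1
        = ∑ k, v (π k) := by
    intro v
    rw [Matrix.mul_apply]
    refine Finset.sum_congr rfl fun k _ => ?_
    rw [Matrix.mul_diagonal, Matrix.conjTranspose_apply, hXe, hXe]
    simp only [sigMat, Matrix.of_apply, if_pos rfl]
    have h1 : ((1 : Fin 2)) ≠ 0 := by decide
    rw [if_neg h1]
    have hb : (0 : ℝ) ≤ β k := (hβ k).le
    have hps : Real.sqrt (p (π k)) ≠ 0 :=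
      Real.sqrt_ne_zero'.mpr (hp _)
    have hbs : (Real.sqrt (β k) : ℂ) ≠ 0 := by
      norm_cast
      exact Real.sqrt_ne_zero'.mpr (hβ k)
    have hsq : ((Real.sqrt (β k) : ℝ) : ℂ) * ((Real.sqrt (β k) : ℝ) : ℂ) = ((β k : ℝ) : ℂ) := by
      norm_cast
      exact Real.mul_self_sqrt hb
    have hps' : ((Real.sqrt (p (π k)) : ℝ) : ℂ) ≠ 0 := by exact_mod_cast hps
    simp only [star_mul', star_inv₀, Complex.star_def, Complex.conj_ofReal, if_true]
    rw [← hsq]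
    push_cast
    field_simp
  have hsum : ∑ k, s (π k) = ∑ k, s' (π k) := by
    rw [← key s, ← key s', hGram]
  have hsum' : ∑ k, s k = ∑ k, s' k := by
    rwa [Equiv.sum_comp π s, Equiv.sum_comp π s'] at hsum
  have hss : s = s' := hX s s' hs hs' hsum'
  exact ⟨hss, by rw [hss]⟩
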